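/- Let ℓ be a positive integer, τ ∈ ℂ with Im τ > 0, η ∈ ℂ, and E ∈ ℂ. Then the (2ℓ+1)×(2ℓ+1) determinant det( δ_{ij}·E·θ1(2(ℓ+1−i)η) + δ_{i,j−1}·θ1(2(2ℓ+1−i)η) + δ_{i,j+1}·θ1(−2(i−1)η) )_{1≤i,j≤2ℓ+1} equals 0. -/

import Mathlib

open Complex Finset

/-- Jacobi theta function θ₁(x|τ). -/
noncomputable def theta1 (τ x : ℂ) : ℂ :=
  ∑' k : ℤ, Complex.exp ((Real.pi : ℂ) * Complex.I * τ * ((k : ℂ) + 1/2)^2 +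
    2 * (Real.pi : ℂ) * Complex.I * (x + 1/2) * ((k : ℂ) + 1/2))

/-- Elliptic number [n] = θ₁(2nη). -/
noncomputable def en (τ η : ℂ) (n : ℤ) : ℂ := theta1 τ (2 * (n : ℂ) * η)

/-- Elliptic factorial [n]! = ∏_{j=1}^n [j]. -/
noncomputable def efact (τ η : ℂ) (n : ℕ) : ℂ := ∏ j ∈ Finset.range n, en τ η ((j : ℤ) + 1)

/-- Elliptic binomial coefficient [n over m]. -/
noncomputable def ebinom (τ η : ℂ) (n m : ℕ) : ℂ :=
  efact τ η n / (efact τ η m * efact τ η (n - m))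

/-- Φ(x,ζ) = θ₁(ζ+x)/(θ₁(x)θ₁(ζ)). -/
noncomputable def Phi (τ x ζ : ℂ) : ℂ := theta1 τ (ζ + x) / (theta1 τ x * theta1 τ ζ)

/-- The polynomials A_{(ℓ−s)η}(E), indexed by s = 0, 1, …, ℓ;
`Apoly τ η ℓ E s = A_{(ℓ−s)η}(E)`. -/
noncomputable def Apoly (τ η : ℂ) (ℓ : ℕ) (E : ℂ) : ℕ → ℂ
  | 0 => 1
  | 1 => en τ η (ℓ : ℤ) / en τ η (2 * (ℓ : ℤ)) * E
  | (s + 2) =>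
      en τ η ((ℓ : ℤ) - (s + 1)) / en τ η (2 * (ℓ : ℤ) - (s + 1)) * E *
        Apoly τ η ℓ E (s + 1)
      + en τ η ((s : ℤ) + 1) / en τ η (2 * (ℓ : ℤ) - (s + 1)) * Apoly τ η ℓ E s

/-- The coefficient A_k(x,λ) of the commuting difference operator A_λ. -/
noncomputable def Acoef (τ η : ℂ) (ℓ : ℕ) (k : ℕ) (x lam : ℂ) : ℂ :=
  (-1 : ℂ)^k * (efact τ η ℓ / efact τ η (2*ℓ)) * ebinom τ η ℓ k *
  (∏ j ∈ Finset.range (ℓ - k),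
     theta1 τ (2*x + 2*((ℓ : ℂ) - (j : ℂ))*η) * theta1 τ (2*lam + 2*((ℓ : ℂ) - (j : ℂ))*η) /
       theta1 τ (2*x + 2*lam + 2*((k : ℂ) - (j : ℂ))*η)) *
  (∏ j ∈ Finset.range k,
     theta1 τ (2*x - 2*((ℓ : ℂ) - (j : ℂ))*η) * theta1 τ (2*lam - 2*((ℓ : ℂ) - (j : ℂ))*η) /
       theta1 τ (2*x + 2*lam + 2*((k : ℂ) + (j : ℂ) - (ℓ : ℂ))*η))

/-- The difference operator A_λ acting on functions: (A_λ f)(x) = Σ_k A_k(x,λ) f(x+(2k−ℓ)η+λ). -/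
noncomputable def Aop (τ η : ℂ) (ℓ : ℕ) (lam : ℂ) (f : ℂ → ℂ) (x : ℂ) : ℂ :=
  ∑ k ∈ Finset.range (ℓ + 1), Acoef τ η ℓ k x lam * f (x + (2*(k : ℂ) - (ℓ : ℂ))*η + lam)

/-- All theta-denominators occurring in the coefficients A_k(x,λ) are nonzero. -/
def domAcoef (τ η : ℂ) (ℓ : ℕ) (x lam : ℂ) : Prop :=
  ∀ k ∈ Finset.range (ℓ + 1),
    (∀ j ∈ Finset.range (ℓ - k), theta1 τ (2*x + 2*lam + 2*((k : ℂ) - (j : ℂ))*η) ≠ 0) ∧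
    (∀ j ∈ Finset.range k, theta1 τ (2*x + 2*lam + 2*((k : ℂ) + (j : ℂ) - (ℓ : ℂ))*η) ≠ 0)

/-- The space Θ⁺_{4ℓ} of even theta functions of order 4ℓ. -/
def ThetaPlus (τ : ℂ) (ℓ : ℕ) (F : ℂ → ℂ) : Prop :=
  Differentiable ℂ F ∧
  (∀ x, F (x + 1) = F x) ∧
  (∀ x, F (x + τ) = Complex.exp (-4*(Real.pi : ℂ)*Complex.I*(ℓ : ℂ)*τ
      - 8*(Real.pi : ℂ)*Complex.I*(ℓ : ℂ)*x) * F x) ∧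
  (∀ x, F (-x) = F x)

lemma theta1_odd (τ x : ℂ) : theta1 τ (-x) = - theta1 τ x := by
  unfold theta1
  rw [← tsum_neg]
  rw [← ((Equiv.addRight (1:ℤ)).trans (Equiv.neg ℤ)).tsum_eq]
  congr 1; funext k
  simp only [Equiv.trans_apply, Equiv.coe_addRight, Equiv.neg_apply]
  have h1 : (Real.pi : ℂ) * Complex.I * τ * (((-(k+1) : ℤ) : ℂ) + 1/2)^2 +
      2 * (Real.pi : ℂ) * Complex.I * (-x + 1/2) * (((-(k+1) : ℤ) : ℂ) + 1/2)
      = ((Real.pi : ℂ) * Complex.I * τ * ((k : ℂ) + 1/2)^2 +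
        2 * (Real.pi : ℂ) * Complex.I * (x + 1/2) * ((k : ℂ) + 1/2))
        + ((-k : ℤ) * (2 * (Real.pi:ℂ) * Complex.I)) + (-((Real.pi:ℂ) * Complex.I)) := by
    push_cast; ring
  rw [h1, Complex.exp_add, Complex.exp_add, Complex.exp_int_mul_two_pi_mul_I,
    Complex.exp_neg, Complex.exp_pi_mul_I]
  ring

/-- the (2ℓ+1)×(2ℓ+1) tridiagonal theta-determinant vanishes;
this expresses the holomorphy of T_{2ℓ+1}(u,E) at u = 0. -/
theorem transfer_matrix_determinant_vanishes
    (τ : ℂ) (hτ : 0 < τ.im) (ℓ : ℕ) (hℓ : 0 < ℓ) (η E : ℂ) :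
    Matrix.det (Matrix.of fun i j : Fin (2*ℓ + 1) =>
        (if i = j then E * theta1 τ (2*((ℓ : ℂ) - ((i : ℕ) : ℂ))*η) else 0)
        + (if (j : ℕ) = (i : ℕ) + 1 then theta1 τ (2*(2*(ℓ : ℂ) - ((i : ℕ) : ℂ))*η) else 0)
        + (if (i : ℕ) = (j : ℕ) + 1 then theta1 τ (-2*((i : ℕ) : ℂ)*η) else 0)) = 0 := by
  set M : Matrix (Fin (2*ℓ+1)) (Fin (2*ℓ+1)) ℂ := Matrix.of fun i j : Fin (2*ℓ + 1) =>
        (if i = j then E * theta1 τ (2*((ℓ : ℂ) - ((i : ℕ) : ℂ))*η) else 0)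
        + (if (j : ℕ) = (i : ℕ) + 1 then theta1 τ (2*(2*(ℓ : ℂ) - ((i : ℕ) : ℂ))*η) else 0)
        + (if (i : ℕ) = (j : ℕ) + 1 then theta1 τ (-2*((i : ℕ) : ℂ)*η) else 0) with hM
  have key : M.submatrix Fin.rev Fin.rev = -M := by
    ext i j
    have hib : (i : ℕ) ≤ 2*ℓ := Nat.lt_succ_iff.mp i.isLt
    have hjb : (j : ℕ) ≤ 2*ℓ := Nat.lt_succ_iff.mp j.isLt
    have hri : (i.rev : ℕ) = 2*ℓ - (i:ℕ) := by rw [Fin.val_rev]; omega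
    have hrj : (j.rev : ℕ) = 2*ℓ - (j:ℕ) := by rw [Fin.val_rev]; omega
    have hci : ((i.rev : ℕ) : ℂ) = 2*(ℓ:ℂ) - ((i:ℕ):ℂ) := by
      rw [hri]; push_cast [Nat.cast_sub hib]; ring
    simp only [Matrix.submatrix_apply, Matrix.neg_apply, hM, Matrix.of_apply]
    have c1 : (i.rev = j.rev) ↔ (i = j) := Fin.rev_inj
    have c2 : ((j.rev : ℕ) = (i.rev : ℕ) + 1) ↔ ((i:ℕ) = (j:ℕ) + 1) := by
      rw [hri, hrj]; omega
    have c3 : ((i.rev : ℕ) = (j.rev : ℕ) + 1) ↔ ((j:ℕ) = (i:ℕ) + 1) := by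
      rw [hri, hrj]; omega
    simp only [c1, c2, c3, hci]
    have hA : (if i = j then E * theta1 τ (2*((ℓ:ℂ) - (2*(ℓ:ℂ) - ((i:ℕ):ℂ)))*η) else 0)
        = -(if i = j then E * theta1 τ (2*((ℓ:ℂ) - ((i:ℕ):ℂ))*η) else 0) := by
      split_ifs with h
      · have : 2*((ℓ:ℂ) - (2*(ℓ:ℂ) - ((i:ℕ):ℂ)))*η = -(2*((ℓ:ℂ) - ((i:ℕ):ℂ))*η) := by ring
        rw [this, theta1_odd]; ring
      · ring
    have hB : (if (i:ℕ) = (j:ℕ)+1 then theta1 τ (2*(2*(ℓ:ℂ) - (2*(ℓ:ℂ) - ((i:ℕ):ℂ)))*η) else 0)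
        = -(if (i:ℕ) = (j:ℕ)+1 then theta1 τ (-2*((i:ℕ):ℂ)*η) else 0) := by
      split_ifs with h
      · have : 2*(2*(ℓ:ℂ) - (2*(ℓ:ℂ) - ((i:ℕ):ℂ)))*η = -(-2*((i:ℕ):ℂ)*η) := by ring
        rw [this, theta1_odd]
      · ring
    have hC : (if (j:ℕ) = (i:ℕ)+1 then theta1 τ (-2*(2*(ℓ:ℂ) - ((i:ℕ):ℂ))*η) else 0)
        = -(if (j:ℕ) = (i:ℕ)+1 then theta1 τ (2*(2*(ℓ:ℂ) - ((i:ℕ):ℂ))*η) else 0) := by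
      split_ifs with h
      · have : -2*(2*(ℓ:ℂ) - ((i:ℕ):ℂ))*η = -(2*(2*(ℓ:ℂ) - ((i:ℕ):ℂ))*η) := by ring
        rw [this, theta1_odd]
      · ring
    rw [hA, hB, hC]; ring
  have h1 : M.det = (-M).det := by
    rw [← key]
    exact (Matrix.det_submatrix_equiv_self Fin.revPerm M).symm
  rw [Matrix.det_neg] at h1
  simp only [Fintype.card_fin] at h1
  have hodd : (-1 : ℂ)^(2*ℓ+1) = -1 := Odd.neg_one_pow ⟨ℓ, by ring⟩
  rw [hodd] at h1
  have h2 : (2:ℂ) * M.det = 0 := by linear_combination h1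
  exact (mul_eq_zero.mp h2).resolve_left two_ne_zero
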